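/- Suppose d = 1 (so an EL-chart is a semi-module: a non-empty subset A ⊆ ℤ bounded below with A + m ⊆ A and A + n ⊆ A). Call a semi-module A small if A + n ⊆ A + m (i.e. A + n ⊆ f(A) for f(a) = a + m). Then the type induces a bijection from the set of equivalence classes of small semi-modules onto the set of words μ' ∈ {0,1}^n with exactly m entries equal to 1 such that Σ_{i=1}^k μ'_i ≤ km/n for every k = 1,…,n; these words correspond exactly to rational Dyck paths from (0,0) to (n−m, m). -/
import Mathlib


namespace SemiModule

/-- A semi-module for coprime `m, n`: a non-empty subset `A ⊆ ℤ`, bounded below, with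
`A + m ⊆ A` and `A + n ⊆ A` (the case `d = 1` of EL-charts, with `f a = a + m`). -/
def IsSemiModule (n m : ℕ) (A : Set ℤ) : Prop :=
  A.Nonempty ∧ (∃ c : ℤ, ∀ x ∈ A, c ≤ x) ∧
    (∀ x ∈ A, x + (m : ℤ) ∈ A) ∧ (∀ x ∈ A, x + (n : ℤ) ∈ A)

/-- A semi-module is small if `A + n ⊆ A + m`, i.e. `A + n ⊆ f(A)`. -/
def IsSmall (n m : ℕ) (A : Set ℤ) : Prop :=
  ∀ x ∈ A, ∃ y ∈ A, x + (n : ℤ) = y + (m : ℤ)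

/-- Two semi-modules are equivalent if they differ by an integer shift. -/
def SMEquiv (A A' : Set ℤ) : Prop := ∃ z : ℤ, (fun x => x + z) '' A = A'

/-- `B = A ∖ (A + n)`. -/
def BsetZ (n : ℕ) (A : Set ℤ) : Set ℤ := {x | x ∈ A ∧ x - (n : ℤ) ∉ A}

/-- The sequence `b 0, b 1, …` associated with a semi-module: `b 0 = min B` and `b (i+1)` is
the unique element of `B` of the form `b i + m − c * n` with `c` a non-negative integer. -/
noncomputable def bseqZ (n m : ℕ) (A : Set ℤ) : ℕ → ℤ
  | 0 => sInf (BsetZ n A)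
  | i + 1 => sInf {y : ℤ | y ∈ BsetZ n A ∧
      (bseqZ n m A i + (m : ℤ) - y) % (n : ℤ) = 0 ∧ y ≤ bseqZ n m A i + (m : ℤ)}

/-- The entry `μ'_k` (for `1 ≤ k ≤ n`) of the type of a semi-module:
the non-negative integer with `b k = b (k-1) + m − μ'_k * n`. -/
noncomputable def typeZ (n m : ℕ) (A : Set ℤ) (k : ℕ) : ℤ :=
  (bseqZ n m A (k - 1) + (m : ℤ) - bseqZ n m A k) / (n : ℤ)

/-- Membership in the set of words corresponding to rational Dyck paths from `(0,0)` to
`(n−m, m)`: all entries in `{0,1}`, exactly `m` entries equal to `1`, and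
`Σ_{j=1}^k μ_j ≤ k*m/n` for `k = 1, …, n`. -/
def IsDyckWord (n m : ℕ) (μ : ℕ → ℤ) : Prop :=
  (∀ k : ℕ, 1 ≤ k → k ≤ n → μ k = 0 ∨ μ k = 1) ∧
    (∑ k ∈ Finset.Icc 1 n, μ k) = (m : ℤ) ∧
    (∀ k : ℕ, 1 ≤ k → k ≤ n →
      (n : ℤ) * ∑ j ∈ Finset.Icc 1 k, μ j ≤ (k : ℤ) * (m : ℤ))

lemma add_nsmul_mem {n m : ℕ} {A : Set ℤ} (hA : IsSemiModule n m A) {x : ℤ} (hx : x ∈ A)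
    (t : ℕ) : x + t * n ∈ A := by
  induction t with
  | zero => simpa using hx
  | succ t ih =>
    have h := hA.2.2.2 _ ih
    have e : x + ((t : ℤ) + 1) * n = x + t * n + n := by ring
    push_cast
    rw [e]; exact h

lemma exists_B {n m : ℕ} {A : Set ℤ} (hA : IsSemiModule n m A) (hn : 0 < n) {x : ℤ}
    (hx : x ∈ A) : ∃ b ∈ BsetZ n A, ∃ t : ℕ, x = b + t * n := by
  obtain ⟨-, ⟨c, hc⟩, -, -⟩ := hA
  have key : ∀ N : ℕ, ∀ x ∈ A, (x - c).toNat ≤ N → ∃ b ∈ BsetZ n A, ∃ t : ℕ, x = b + t * n := by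
    intro N
    induction N with
    | zero =>
      intro x hx h0
      refine ⟨x, ⟨hx, fun hxn => ?_⟩, 0, by simp⟩
      have := hc _ hxn
      omega
    | succ N ih =>
      intro x hx h
      by_cases hxn : x - n ∈ A
      · have hcx : c ≤ x - n := hc _ hxn
        obtain ⟨b, hb, t, ht⟩ := ih (x - n) hxn (by omega)
        refine ⟨b, hb, t + 1, by push_cast at ht ⊢; linarith⟩
      · exact ⟨x, ⟨hx, hxn⟩, 0, by simp⟩
  exact key (x - c).toNat x hx le_rfl

lemma B_unique {n m : ℕ} {A : Set ℤ} (hA : IsSemiModule n m A) (hn : 0 < n) {b b' : ℤ}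
    (hb : b ∈ BsetZ n A) (hb' : b' ∈ BsetZ n A) (hd : (n : ℤ) ∣ b' - b) : b = b' := by
  obtain ⟨k, hk⟩ := hd
  rcases lt_trichotomy k 0 with hk0 | hk0 | hk0
  · exfalso
    apply hb.2
    have ht : (((-k - 1).toNat : ℤ)) = -k - 1 := Int.toNat_of_nonneg (by omega)
    have he : b - n = b' + ((-k - 1).toNat : ℤ) * n := by rw [ht]; linear_combination -hk
    rw [he]
    exact add_nsmul_mem hA hb'.1 _
  · subst hk0; simp at hk; linarith
  · exfalso
    apply hb'.2
    have ht : (((k - 1).toNat : ℤ)) = k - 1 := Int.toNat_of_nonneg (by omega)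
    have he : b' - n = b + ((k - 1).toNat : ℤ) * n := by rw [ht]; linear_combination hk
    rw [he]
    exact add_nsmul_mem hA hb.1 _

lemma next_eq {n m : ℕ} {A : Set ℤ} (hA : IsSemiModule n m A) (hn : 0 < n) {x : ℤ}
    (hx : x ∈ A) :
    ∃ b ∈ BsetZ n A,
      {y : ℤ | y ∈ BsetZ n A ∧ (x + (m : ℤ) - y) % (n : ℤ) = 0 ∧ y ≤ x + (m : ℤ)} = {b} := by
  obtain ⟨b, hb, t, ht⟩ := exists_B hA hn (hA.2.2.1 _ hx)
  refine ⟨b, hb, ?_⟩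
  ext y
  simp only [Set.mem_setOf_eq, Set.mem_singleton_iff]
  constructor
  · rintro ⟨hyB, hymod, hyle⟩
    have hdvd : (n : ℤ) ∣ (x + m - y) := Int.dvd_of_emod_eq_zero hymod
    obtain ⟨k, hk⟩ := hdvd
    exact B_unique hA hn hyB hb ⟨k - t, by push_cast; linear_combination hk - ht⟩
  · rintro rfl
    have h1 : x + (m : ℤ) - y = t * n := by linarith
    refine ⟨hb, by rw [h1]; exact Int.emod_eq_zero_of_dvd ⟨t, by ring⟩, ?_⟩
    have h2 : (0 : ℤ) ≤ (t : ℤ) * n := by positivity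
    linarith

lemma bseq_mem {n m : ℕ} {A : Set ℤ} (hA : IsSemiModule n m A) (hn : 0 < n) :
    ∀ i, bseqZ n m A i ∈ BsetZ n A := by
  intro i
  induction i with
  | zero =>
    show sInf (BsetZ n A) ∈ BsetZ n A
    obtain ⟨a, ha⟩ := hA.1
    obtain ⟨b, hb, -⟩ := exists_B hA hn ha
    obtain ⟨c, hc⟩ := hA.2.1
    exact Int.csInf_mem ⟨b, hb⟩ ⟨c, fun y hy => hc _ hy.1⟩
  | succ i ih =>
    obtain ⟨b, hb, hS⟩ := next_eq hA hn (m := m) ih.1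
    show sInf _ ∈ _
    rw [hS, csInf_singleton]
    exact hb

lemma bseq_succ_eq {n m : ℕ} {A : Set ℤ} (hA : IsSemiModule n m A) (hn : 0 < n) (i : ℕ)
    {y : ℤ} (hy : y ∈ BsetZ n A) (hd : (n : ℤ) ∣ (bseqZ n m A i + m - y))
    (hle : y ≤ bseqZ n m A i + m) : bseqZ n m A (i + 1) = y := by
  obtain ⟨b, hb, hS⟩ := next_eq hA hn (m := m) (bseq_mem hA hn i).1
  have h1 : y ∈ {y : ℤ | y ∈ BsetZ n A ∧
      (bseqZ n m A i + (m : ℤ) - y) % (n : ℤ) = 0 ∧ y ≤ bseqZ n m A i + (m : ℤ)} :=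
    ⟨hy, Int.emod_eq_zero_of_dvd hd, hle⟩
  rw [hS] at h1
  show sInf _ = y
  rw [hS, csInf_singleton]
  exact h1.symm

lemma bseq_zero_eq {n m : ℕ} {A : Set ℤ} {y : ℤ} (h : IsLeast (BsetZ n A) y) :
    bseqZ n m A 0 = y := by
  show sInf (BsetZ n A) = y
  exact h.csInf_eq

lemma bseq_zero_isLeast {n m : ℕ} {A : Set ℤ} (hA : IsSemiModule n m A) (hn : 0 < n) :
    IsLeast (BsetZ n A) (bseqZ n m A 0) := by
  refine ⟨bseq_mem hA hn 0, fun y hy => ?_⟩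
  obtain ⟨c, hc⟩ := hA.2.1
  exact csInf_le ⟨c, fun z hz => hc _ hz.1⟩ hy

lemma bseq_succ_spec {n m : ℕ} {A : Set ℤ} (hA : IsSemiModule n m A) (hn : 0 < n) (i : ℕ) :
    (n : ℤ) ∣ (bseqZ n m A i + m - bseqZ n m A (i + 1)) ∧
      bseqZ n m A (i + 1) ≤ bseqZ n m A i + m := by
  obtain ⟨b, hb, hS⟩ := next_eq hA hn (m := m) (bseq_mem hA hn i).1
  have h1 : bseqZ n m A (i + 1) ∈ {y : ℤ | y ∈ BsetZ n A ∧
      (bseqZ n m A i + (m : ℤ) - y) % (n : ℤ) = 0 ∧ y ≤ bseqZ n m A i + (m : ℤ)} := by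
    have : bseqZ n m A (i + 1) = b := by
      show sInf _ = b
      rw [hS, csInf_singleton]
    rw [this, hS]
    rfl
  exact ⟨Int.dvd_of_emod_eq_zero h1.2.1, h1.2.2⟩

lemma type_succ {n m : ℕ} {A : Set ℤ} (hA : IsSemiModule n m A) (hn : 0 < n) (i : ℕ) :
    bseqZ n m A (i + 1) = bseqZ n m A i + m - n * typeZ n m A (i + 1) := by
  have hd := (bseq_succ_spec hA hn i).1
  have h1 : (n : ℤ) * typeZ n m A (i + 1) = bseqZ n m A i + m - bseqZ n m A (i + 1) := by
    unfold typeZ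
    simp only [Nat.add_sub_cancel]
    exact Int.mul_ediv_cancel' hd
  linarith

lemma type_nonneg {n m : ℕ} {A : Set ℤ} (hA : IsSemiModule n m A) (hn : 0 < n) (i : ℕ) :
    0 ≤ typeZ n m A (i + 1) := by
  have hle := (bseq_succ_spec hA hn i).2
  unfold typeZ
  simp only [Nat.add_sub_cancel]
  exact Int.ediv_nonneg (by linarith) (by positivity)

lemma bseq_telescope {n m : ℕ} {A : Set ℤ} (hA : IsSemiModule n m A) (hn : 0 < n) :
    ∀ k : ℕ, bseqZ n m A k =
      bseqZ n m A 0 + k * m - n * ∑ j ∈ Finset.Icc 1 k, typeZ n m A j := by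
  intro k
  induction k with
  | zero => simp
  | succ k ih =>
    rw [Finset.sum_Icc_succ_top (by omega : 1 ≤ k + 1), type_succ hA hn k, ih]
    push_cast
    ring

lemma bseq_res {n m : ℕ} {A : Set ℤ} (hA : IsSemiModule n m A) (hn : 0 < n) (i : ℕ) :
    (n : ℤ) ∣ bseqZ n m A i - (bseqZ n m A 0 + i * m) :=
  ⟨-∑ j ∈ Finset.Icc 1 i, typeZ n m A j, by rw [bseq_telescope hA hn i]; ring⟩

lemma bseq_n_eq {n m : ℕ} {A : Set ℤ} (hA : IsSemiModule n m A) (hn : 0 < n) :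
    bseqZ n m A n = bseqZ n m A 0 := by
  apply B_unique hA hn (bseq_mem hA hn n) (bseq_mem hA hn 0)
  obtain ⟨k, hk⟩ := bseq_res hA hn n
  exact ⟨-k - m, by linear_combination -hk⟩

lemma type_sum {n m : ℕ} {A : Set ℤ} (hA : IsSemiModule n m A) (hn : 0 < n) :
    ∑ j ∈ Finset.Icc 1 n, typeZ n m A j = m := by
  have h := bseq_telescope hA hn n
  rw [bseq_n_eq hA hn] at h
  have hn' : (n : ℤ) ≠ 0 := by positivity
  apply mul_left_cancel₀ hn'
  linarith

lemma type_partial {n m : ℕ} {A : Set ℤ} (hA : IsSemiModule n m A) (hn : 0 < n) (k : ℕ) :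
    (n : ℤ) * ∑ j ∈ Finset.Icc 1 k, typeZ n m A j ≤ k * m := by
  have h := bseq_telescope hA hn k
  have h2 := (bseq_zero_isLeast hA hn).2 (bseq_mem hA hn k)
  linarith

lemma type_le_one {n m : ℕ} {A : Set ℤ} (hA : IsSemiModule n m A)
    (hsmall : IsSmall n m A) (hn : 0 < n) (i : ℕ) : typeZ n m A (i + 1) ≤ 1 := by
  by_contra h
  push_neg at h
  have hts := type_succ hA hn i
  have hmem : bseqZ n m A i + m - 2 * n ∈ A := by
    have he : bseqZ n m A i + m - 2 * n =
        bseqZ n m A (i + 1) + ((typeZ n m A (i + 1) - 2).toNat : ℤ) * n := by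
      rw [Int.toNat_of_nonneg (by omega)]
      linear_combination -hts
    rw [he]
    exact add_nsmul_mem hA (bseq_mem hA hn (i + 1)).1 _
  obtain ⟨y, hy, hxy⟩ := hsmall _ hmem
  have he2 : y = bseqZ n m A i - n := by linarith
  exact (bseq_mem hA hn i).2 (he2 ▸ hy)

lemma mem_B_eq_bseq {n m : ℕ} {A : Set ℤ} (hA : IsSemiModule n m A) (hn : 0 < n)
    (hmn : Nat.Coprime m n) {b : ℤ} (hb : b ∈ BsetZ n A) :
    ∃ i < n, b = bseqZ n m A i := by
  obtain ⟨a, a', haa⟩ : IsCoprime (m : ℤ) (n : ℤ) := Nat.isCoprime_iff_coprime.mpr hmn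
  have hn' : (0 : ℤ) < n := by exact_mod_cast hn
  set j : ℤ := (b - bseqZ n m A 0) * a % n with hjdef
  have hj : j = (b - bseqZ n m A 0) * a - n * ((b - bseqZ n m A 0) * a / n) :=
    Int.emod_def _ _
  have hj0 : 0 ≤ j := Int.emod_nonneg _ (by positivity)
  have hjn : j < n := Int.emod_lt_of_pos _ hn'
  refine ⟨j.toNat, by omega, ?_⟩
  apply B_unique hA hn hb (bseq_mem hA hn j.toNat)
  have h1 := bseq_res hA hn j.toNat
  have h2 : (n : ℤ) ∣ (b - bseqZ n m A 0) - j * m :=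
    ⟨(b - bseqZ n m A 0) * a' + ((b - bseqZ n m A 0) * a / n) * m,
      by linear_combination (-(m : ℤ)) * hj + (-(b - bseqZ n m A 0)) * haa⟩
  obtain ⟨k1, hk1⟩ := h1
  obtain ⟨k2, hk2⟩ := h2
  have hcast : ((j.toNat : ℕ) : ℤ) = j := Int.toNat_of_nonneg hj0
  exact ⟨k1 - k2, by linear_combination hk1 - hk2 + (m : ℤ) * hcast⟩

lemma A_eq {n m : ℕ} {A : Set ℤ} (hA : IsSemiModule n m A) (hn : 0 < n)
    (hmn : Nat.Coprime m n) :
    A = {x : ℤ | ∃ i < n, ∃ t : ℕ, x = bseqZ n m A i + t * n} := by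
  ext x
  constructor
  · intro hx
    obtain ⟨b, hb, t, ht⟩ := exists_B hA hn hx
    obtain ⟨i, hi, hbi⟩ := mem_B_eq_bseq hA hn hmn hb
    exact ⟨i, hi, t, by rw [ht, hbi]⟩
  · rintro ⟨i, hi, t, rfl⟩
    exact add_nsmul_mem hA (bseq_mem hA hn i).1 t

lemma isSemiModule_shift {n m : ℕ} {A : Set ℤ} (hA : IsSemiModule n m A) (z : ℤ) :
    IsSemiModule n m ((fun x => x + z) '' A) := by
  obtain ⟨⟨a, ha⟩, ⟨c, hc⟩, hm, hn⟩ := hA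
  refine ⟨⟨a + z, ⟨a, ha, rfl⟩⟩, ⟨c + z, ?_⟩, ?_, ?_⟩
  · rintro x ⟨y, hy, rfl⟩; have := hc _ hy; simp; linarith
  · rintro x ⟨y, hy, rfl⟩; exact ⟨y + m, hm _ hy, by ring⟩
  · rintro x ⟨y, hy, rfl⟩; exact ⟨y + n, hn _ hy, by ring⟩

lemma mem_shift {A : Set ℤ} {z y : ℤ} : y ∈ (fun x => x + z) '' A ↔ y - z ∈ A := by
  constructor
  · rintro ⟨a, ha, rfl⟩; simpa using ha
  · intro h; exact ⟨y - z, h, by ring⟩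

lemma mem_B_shift {n : ℕ} {A : Set ℤ} {z y : ℤ} :
    y ∈ BsetZ n ((fun x => x + z) '' A) ↔ y - z ∈ BsetZ n A := by
  unfold BsetZ
  simp only [Set.mem_setOf_eq, mem_shift, sub_right_comm]

lemma bseq_shift {n m : ℕ} {A : Set ℤ} (hA : IsSemiModule n m A) (hn : 0 < n) (z : ℤ) :
    ∀ i, bseqZ n m ((fun x => x + z) '' A) i = bseqZ n m A i + z := by
  intro i
  induction i with
  | zero =>
    apply bseq_zero_eq
    constructor
    · rw [mem_B_shift]; simpa using (bseq_zero_isLeast hA hn).1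
    · intro y hy
      have := (bseq_zero_isLeast hA hn).2 (mem_B_shift.mp hy)
      linarith
  | succ i ih =>
    apply bseq_succ_eq (isSemiModule_shift hA z) hn
    · rw [mem_B_shift]; simpa using bseq_mem hA hn (i + 1)
    · rw [ih]
      obtain ⟨k, hk⟩ := (bseq_succ_spec hA hn i).1
      exact ⟨k, by linear_combination hk⟩
    · rw [ih]
      linarith [(bseq_succ_spec hA hn i).2]

lemma type_shift {n m : ℕ} {A : Set ℤ} (hA : IsSemiModule n m A) (hn : 0 < n) (z : ℤ)
    (k : ℕ) : typeZ n m ((fun x => x + z) '' A) k = typeZ n m A k := by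
  unfold typeZ
  rw [bseq_shift hA hn z, bseq_shift hA hn z]
  ring_nf

/-- The partial-sum path of a word. -/
def cseq (n m : ℕ) (μ : ℕ → ℤ) (k : ℕ) : ℤ :=
  (k : ℤ) * m - n * ∑ j ∈ Finset.Icc 1 k, μ j

/-- The canonical small semi-module attached to a word. -/
def Amod (n m : ℕ) (μ : ℕ → ℤ) : Set ℤ :=
  {x : ℤ | ∃ k < n, ∃ t : ℕ, x = cseq n m μ k + t * n}

section Construction
variable {n m : ℕ} {μ : ℕ → ℤ}

lemma cseq_zero : cseq n m μ 0 = 0 := by simp [cseq]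

lemma cseq_step (k : ℕ) : cseq n m μ (k + 1) = cseq n m μ k + m - n * μ (k + 1) := by
  unfold cseq
  rw [Finset.sum_Icc_succ_top (by omega : 1 ≤ k + 1)]
  push_cast
  ring

lemma cseq_n (hd : IsDyckWord n m μ) : cseq n m μ n = 0 := by
  unfold cseq
  rw [hd.2.1]
  ring

lemma cseq_nonneg (hd : IsDyckWord n m μ) {k : ℕ} (hk : k ≤ n) : 0 ≤ cseq n m μ k := by
  rcases Nat.eq_zero_or_pos k with rfl | hk1
  · simp [cseq_zero]
  · have := hd.2.2 k hk1 hk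
    unfold cseq
    linarith

lemma cseq_inj (hn : 0 < n) (hmn : Nat.Coprime m n) {i j : ℕ} (hi : i < n) (hj : j < n)
    (hdvd : (n : ℤ) ∣ cseq n m μ i - cseq n m μ j) : i = j := by
  obtain ⟨k, hk⟩ := hdvd
  have h1 : (n : ℤ) ∣ ((i : ℤ) - j) * m :=
    ⟨k + ∑ x ∈ Finset.Icc 1 i, μ x - ∑ x ∈ Finset.Icc 1 j, μ x, by
      unfold cseq at hk; linear_combination hk⟩
  have hco : IsCoprime (n : ℤ) (m : ℤ) := Nat.isCoprime_iff_coprime.mpr hmn.symm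
  have h2 : (n : ℤ) ∣ ((i : ℤ) - j) := hco.dvd_of_dvd_mul_right h1
  have h3 : ((i : ℤ) - j) = 0 :=
    Int.eq_zero_of_dvd_of_natAbs_lt_natAbs h2 (by omega)
  omega

lemma Amod_isSemiModule (hn : 0 < n) (hd : IsDyckWord n m μ) :
    IsSemiModule n m (Amod n m μ) := by
  refine ⟨⟨cseq n m μ 0, 0, hn, 0, by simp⟩, ⟨0, ?_⟩, ?_, ?_⟩
  · rintro x ⟨k, hk, t, rfl⟩
    have h1 := cseq_nonneg hd (le_of_lt hk)
    have h2 : (0 : ℤ) ≤ (t : ℤ) * n := by positivity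
    linarith
  · rintro x ⟨k, hk, t, rfl⟩
    have h3 := cseq_step (n := n) (m := m) (μ := μ) k
    rcases hd.1 (k + 1) (by omega) (by omega) with h | h <;>
      rcases Nat.lt_or_ge (k + 1) n with hkn | hkn
    · exact ⟨k + 1, hkn, t, by push_cast; linear_combination -h3 + (n : ℤ) * h⟩
    · have hkn' : k + 1 = n := by omega
      have h4 : cseq n m μ (k + 1) = 0 := by rw [hkn']; exact cseq_n hd
      exact ⟨0, hn, t, by
        rw [cseq_zero]; push_cast; linear_combination -h3 + h4 + (n : ℤ) * h⟩
    · exact ⟨k + 1, hkn, t + 1, by push_cast; linear_combination -h3 + (n : ℤ) * h⟩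
    · have hkn' : k + 1 = n := by omega
      have h4 : cseq n m μ (k + 1) = 0 := by rw [hkn']; exact cseq_n hd
      exact ⟨0, hn, t + 1, by
        rw [cseq_zero]; push_cast; linear_combination -h3 + h4 + (n : ℤ) * h⟩
  · rintro x ⟨k, hk, t, rfl⟩
    exact ⟨k, hk, t + 1, by push_cast; ring⟩

lemma Amod_isSmall (hn : 0 < n) (hd : IsDyckWord n m μ) : IsSmall n m (Amod n m μ) := by
  rintro x ⟨k, hk, t, rfl⟩
  rcases Nat.eq_zero_or_pos k with rfl | hk1
  · -- use index n - 1
    have hn1 : n - 1 + 1 = n := by omega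
    have h3 := cseq_step (n := n) (m := m) (μ := μ) (n - 1)
    rw [hn1] at h3
    have h4 : cseq n m μ n = 0 := cseq_n hd
    rcases hd.1 n (by omega) le_rfl with h | h
    · refine ⟨cseq n m μ (n - 1) + ((t + 1 : ℕ) : ℤ) * n, ⟨n - 1, by omega, t + 1, rfl⟩, ?_⟩
      rw [cseq_zero]
      push_cast
      linear_combination h3 - h4 - (n : ℤ) * h
    · refine ⟨cseq n m μ (n - 1) + (t : ℤ) * n, ⟨n - 1, by omega, t, rfl⟩, ?_⟩
      rw [cseq_zero]
      push_cast
      linear_combination h3 - h4 - (n : ℤ) * h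
  · have hk1' : k - 1 + 1 = k := by omega
    have h3 := cseq_step (n := n) (m := m) (μ := μ) (k - 1)
    rw [hk1'] at h3
    rcases hd.1 k hk1 (le_of_lt hk) with h | h
    · refine ⟨cseq n m μ (k - 1) + ((t + 1 : ℕ) : ℤ) * n, ⟨k - 1, by omega, t + 1, rfl⟩, ?_⟩
      push_cast
      linear_combination h3 - (n : ℤ) * h
    · refine ⟨cseq n m μ (k - 1) + (t : ℤ) * n, ⟨k - 1, by omega, t, rfl⟩, ?_⟩
      push_cast
      linear_combination h3 - (n : ℤ) * h

lemma cseq_mem_B (hn : 0 < n) (hmn : Nat.Coprime m n) (hd : IsDyckWord n m μ) {k : ℕ}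
    (hk : k < n) : cseq n m μ k ∈ BsetZ n (Amod n m μ) := by
  refine ⟨⟨k, hk, 0, by simp⟩, ?_⟩
  rintro ⟨j, hj, t, ht⟩
  have hij : k = j := by
    apply cseq_inj hn hmn hk hj
    exact ⟨(t : ℤ) + 1, by linear_combination ht⟩
  rw [← hij] at ht
  have h2 : (0 : ℤ) ≤ (t : ℤ) * n := by positivity
  have hn' : (0 : ℤ) < n := by exact_mod_cast hn
  linarith

lemma bseq_Amod (hn : 0 < n) (hmn : Nat.Coprime m n) (hd : IsDyckWord n m μ) :
    ∀ i : ℕ, i ≤ n → bseqZ n m (Amod n m μ) i = cseq n m μ i := by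
  intro i
  induction i with
  | zero =>
    intro _
    apply bseq_zero_eq
    refine ⟨cseq_mem_B hn hmn hd hn, ?_⟩
    intro y hy
    obtain ⟨j, hj, t, rfl⟩ := hy.1
    rw [cseq_zero]
    have h1 := cseq_nonneg hd (le_of_lt hj)
    have h2 : (0 : ℤ) ≤ (t : ℤ) * n := by positivity
    linarith
  | succ i ih =>
    intro hi
    have ihv := ih (by omega)
    have h3 := cseq_step (n := n) (m := m) (μ := μ) i
    have hμ := hd.1 (i + 1) (by omega) hi
    have hB : cseq n m μ (i + 1) ∈ BsetZ n (Amod n m μ) := by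
      rcases Nat.lt_or_ge (i + 1) n with hlt | hge
      · exact cseq_mem_B hn hmn hd hlt
      · have he : i + 1 = n := by omega
        have h4 : cseq n m μ (i + 1) = cseq n m μ 0 := by
          rw [he, cseq_n hd, cseq_zero]
        rw [h4]
        exact cseq_mem_B hn hmn hd hn
    apply bseq_succ_eq (Amod_isSemiModule hn hd) hn i hB
    · rw [ihv]
      exact ⟨μ (i + 1), by linear_combination -h3⟩
    · rw [ihv]
      have hn' : (0 : ℤ) ≤ n := by positivity
      rcases hμ with h | h <;> rw [h] at h3 <;> linarith

lemma type_Amod (hn : 0 < n) (hmn : Nat.Coprime m n) (hd : IsDyckWord n m μ) {k : ℕ}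
    (hk1 : 1 ≤ k) (hkn : k ≤ n) : typeZ n m (Amod n m μ) k = μ k := by
  have hk' : k - 1 + 1 = k := by omega
  have h3 := cseq_step (n := n) (m := m) (μ := μ) (k - 1)
  rw [hk'] at h3
  unfold typeZ
  rw [bseq_Amod hn hmn hd (k - 1) (by omega), bseq_Amod hn hmn hd k hkn]
  have he : cseq n m μ (k - 1) + (m : ℤ) - cseq n m μ k = n * μ k := by
    linear_combination -h3
  rw [he]
  exact Int.mul_ediv_cancel_left _ (by positivity)
end Construction

/-- (`d = 1`.)  The type induces a bijection from the set of equivalence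
classes of small semi-modules onto the set of words `μ' ∈ {0,1}ⁿ` with exactly `m` entries
equal to `1` and `Σ_{i=1}^k μ'_i ≤ k*m/n` for every `k = 1, …, n` — the words corresponding
exactly to the rational Dyck paths from `(0,0)` to `(n−m, m)`. -/
theorem type_bijection_small_semimodules_dyck_paths
    (n m : ℕ) (hn : 0 < n) (hm : 0 < m) (hmn : Nat.Coprime m n) (hlt : m < n) :
    (∀ A A' : Set ℤ, IsSemiModule n m A → IsSmall n m A →
      IsSemiModule n m A' → IsSmall n m A' → SMEquiv A A' →
      ∀ k : ℕ, 1 ≤ k → k ≤ n → typeZ n m A k = typeZ n m A' k) ∧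
    (∀ A : Set ℤ, IsSemiModule n m A → IsSmall n m A → IsDyckWord n m (typeZ n m A)) ∧
    (∀ A A' : Set ℤ, IsSemiModule n m A → IsSmall n m A →
      IsSemiModule n m A' → IsSmall n m A' →
      (∀ k : ℕ, 1 ≤ k → k ≤ n → typeZ n m A k = typeZ n m A' k) → SMEquiv A A') ∧
    (∀ μ : ℕ → ℤ, IsDyckWord n m μ →
      ∃ A : Set ℤ, IsSemiModule n m A ∧ IsSmall n m A ∧
        ∀ k : ℕ, 1 ≤ k → k ≤ n → typeZ n m A k = μ k) := by
  refine ⟨?_, ?_, ?_, ?_⟩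
  · -- type is invariant under equivalence
    rintro A A' hA hsA hA' hsA' ⟨z, hz⟩ k hk1 hkn
    rw [← hz, type_shift hA hn z k]
  · -- the type of a small semi-module is a Dyck word
    intro A hA hsA
    refine ⟨?_, type_sum hA hn, fun k _ _ => type_partial hA hn k⟩
    intro k hk1 hkn
    obtain ⟨i, rfl⟩ : ∃ i, k = i + 1 := ⟨k - 1, by omega⟩
    have h1 := type_nonneg hA hn i
    have h2 := type_le_one hA hsA hn i
    omega
  · -- equal types imply equivalence
    intro A A' hA hsA hA' hsA' htype
    refine ⟨bseqZ n m A' 0 - bseqZ n m A 0, ?_⟩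
    have hb : ∀ i : ℕ, i ≤ n →
        bseqZ n m A' i = bseqZ n m A i + (bseqZ n m A' 0 - bseqZ n m A 0) := by
      intro i hi
      rw [bseq_telescope hA' hn i, bseq_telescope hA hn i]
      have hs : ∑ j ∈ Finset.Icc 1 i, typeZ n m A' j =
          ∑ j ∈ Finset.Icc 1 i, typeZ n m A j := by
        refine Finset.sum_congr rfl fun j hj => ?_
        rw [Finset.mem_Icc] at hj
        exact (htype j hj.1 (le_trans hj.2 hi)).symm
      rw [hs]
      ring
    have hAx := Set.ext_iff.mp (A_eq hA hn hmn)
    have hA'x := Set.ext_iff.mp (A_eq hA' hn hmn)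
    simp only [Set.mem_setOf_eq] at hAx hA'x
    ext x
    rw [mem_shift, hAx, hA'x]
    constructor
    · rintro ⟨i, hi, t, ht⟩
      exact ⟨i, hi, t, by rw [hb i (le_of_lt hi)]; linarith⟩
    · rintro ⟨i, hi, t, ht⟩
      refine ⟨i, hi, t, ?_⟩
      rw [hb i (le_of_lt hi)] at ht
      linarith
  · -- every Dyck word is realized
    intro μ hdyck
    exact ⟨Amod n m μ, Amod_isSemiModule hn hdyck, Amod_isSmall hn hdyck,
      fun k hk1 hkn => type_Amod hn hmn hdyck hk1 hkn⟩

end SemiModule
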